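/- Let G = (V,E) be an unweighted digraph. Then G is a 2-sequence graph (i.e., admits a 2-realization) if and only if G is a simple step graph, that is: the strongly connected components of G can be linearly ordered C_1,…,C_m so that the arcs of the condensation R(G) are exactly (C_i, C_{i+1}) for 1 ≤ i < m, and for each 1 ≤ i < m there is exactly one arc (u,v) of G with u ∈ C_i and v ∈ C_{i+1}. -/

import Mathlib

/-- The sequence digraph of `x` with window size `w` has an arc `(u,v)` exactly when
there are positions `k < k' < k + w` with `x_k = u` and `x_{k'} = v`. -/
def seqArc {V : Type*} (w : ℕ) (x : List V) (u v : V) : Prop :=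
  ∃ k k' : ℕ, k < k' ∧ k' < k + w ∧ x[k]? = some u ∧ x[k']? = some v

/-- `x` is a `w`-realization of the digraph on vertex set `V` (self-loops allowed)
with adjacency relation `Adj`. -/
def IsRealizationD {V : Type*} (w : ℕ) (Adj : V → V → Prop) (x : List V) : Prop :=
  x ≠ [] ∧ (∀ v : V, v ∈ x) ∧ ∀ u v : V, Adj u v ↔ seqArc w x u v

/-- Two vertices are equivalent when each is reachable from the other:
the classes are the strongly connected components of the digraph. -/
def sccSetoid {V : Type*} (Adj : V → V → Prop) : Setoid V where
  r u v := Relation.ReflTransGen Adj u v ∧ Relation.ReflTransGen Adj v u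
  iseqv := ⟨fun _ => ⟨Relation.ReflTransGen.refl, Relation.ReflTransGen.refl⟩,
    fun h => ⟨h.2, h.1⟩, fun h1 h2 => ⟨h1.1.trans h2.1, h2.2.trans h1.2⟩⟩

/-- Adjacency of the condensation `R(G)`: its vertices are the strongly connected
components of `G`, with an arc `(C, C')` exactly when `C ≠ C'` and some arc of `G`
goes from `C` to `C'`. -/
def condAdj {V : Type*} (Adj : V → V → Prop) :
    Quotient (sccSetoid Adj) → Quotient (sccSetoid Adj) → Prop := fun C C' =>
  C ≠ C' ∧ ∃ u v : V, Adj u v ∧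
    Quotient.mk (sccSetoid Adj) u = C ∧ Quotient.mk (sccSetoid Adj) v = C'

/-- `G` is a simple step graph: its strongly connected components can be linearly ordered
`C_1, …, C_m` so that the arcs of the condensation are exactly the `(C_i, C_{i+1})`, and for
each `i` there is exactly one arc of `G` from `C_i` to `C_{i+1}`. -/
def IsSimpleStep {V : Type*} (Adj : V → V → Prop) : Prop :=
  ∃ L : List (Quotient (sccSetoid Adj)),
    L.Nodup ∧ (∀ C : Quotient (sccSetoid Adj), C ∈ L) ∧
    (∀ C C' : Quotient (sccSetoid Adj),
      condAdj Adj C C' ↔ ∃ k : ℕ, L[k]? = some C ∧ L[k + 1]? = some C') ∧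
    (∀ (k : ℕ) (C C' : Quotient (sccSetoid Adj)), L[k]? = some C → L[k + 1]? = some C' →
      ∃! e : V × V, Adj e.1 e.2 ∧
        Quotient.mk (sccSetoid Adj) e.1 = C ∧ Quotient.mk (sccSetoid Adj) e.2 = C')

open List Relation

namespace Stmt4Aux

section rle
variable {α : Type*}



/-- collapse adjacent equal elements -/
def rle [DecidableEq α] : List α → List α
  | [] => []
  | [a] => [a]
  | a :: b :: l => if a = b then rle (b :: l) else a :: rle (b :: l)

theorem rle_cons [DecidableEq α] : ∀ (l : List α) (a : α), ∃ t, rle (a :: l) = a :: t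
  | [], a => ⟨[], rfl⟩
  | b :: l, a => by
    by_cases h : a = b
    · obtain ⟨t, ht⟩ := rle_cons l b
      exact ⟨t, by subst h; simp [rle, ht]⟩
    · exact ⟨rle (b :: l), by simp [rle, h]⟩

theorem mem_rle [DecidableEq α] : ∀ (l : List α) (x : α), x ∈ l → x ∈ rle l
  | [a], x, h => by simpa [rle] using h
  | a :: b :: l, x, h => by
    by_cases hab : a = b
    · rw [show rle (a :: b :: l) = rle (b :: l) from by simp [rle, hab]]
      rcases List.mem_cons.1 h with rfl | h
      · exact mem_rle (b :: l) x (hab ▸ List.mem_cons_self)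
      · exact mem_rle (b :: l) x h
    · rw [show rle (a :: b :: l) = a :: rle (b :: l) from by simp [rle, hab]]
      rcases List.mem_cons.1 h with rfl | h
      · exact List.mem_cons_self
      · exact List.mem_cons_of_mem _ (mem_rle (b :: l) x h)

theorem rle_sublist [DecidableEq α] : ∀ l : List α, rle l <+ l
  | [] => .slnil
  | [_] => .refl _
  | a :: b :: l => by
    by_cases hab : a = b
    · rw [show rle (a :: b :: l) = rle (b :: l) from by simp [rle, hab]]
      exact (rle_sublist (b :: l)).cons _
    · rw [show rle (a :: b :: l) = a :: rle (b :: l) from by simp [rle, hab]]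
      exact (rle_sublist (b :: l)).cons₂ _

theorem rle_chain' [DecidableEq α] : ∀ l : List α, Chain' (· ≠ ·) (rle l)
  | [] => List.isChain_nil
  | [a] => List.isChain_singleton a
  | a :: b :: l => by
    by_cases hab : a = b
    · rw [show rle (a :: b :: l) = rle (b :: l) from by simp [rle, hab]]
      exact rle_chain' (b :: l)
    · rw [show rle (a :: b :: l) = a :: rle (b :: l) from by simp [rle, hab]]
      obtain ⟨t, ht⟩ := rle_cons l b
      rw [ht]
      exact List.IsChain.cons_cons hab (ht ▸ rle_chain' (b :: l))

theorem rle_adj [DecidableEq α] : ∀ (l : List α) (k : ℕ) (u v : α),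
    (rle l)[k]? = some u → (rle l)[k+1]? = some v →
    ∃ j : ℕ, l[j]? = some u ∧ l[j+1]? = some v
  | [], k, u, v, h1, _ => by simp [rle] at h1
  | [a], k, u, v, _, h2 => by simp [rle] at h2
  | a :: b :: l, k, u, v, h1, h2 => by
    by_cases hab : a = b
    · rw [show rle (a :: b :: l) = rle (b :: l) from by simp [rle, hab]] at h1 h2
      obtain ⟨j, hj1, hj2⟩ := rle_adj (b :: l) k u v h1 h2
      exact ⟨j + 1, by simpa using hj1, by simpa using hj2⟩
    · rw [show rle (a :: b :: l) = a :: rle (b :: l) from by simp [rle, hab]] at h1 h2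
      cases k with
      | zero =>
        obtain ⟨t, ht⟩ := rle_cons l b
        rw [ht] at h2
        simp only [getElem?_cons_zero, Option.some_inj] at h1
        simp only [getElem?_cons_succ, getElem?_cons_zero, Option.some_inj] at h2
        exact ⟨0, by simp [h1], by simp [h2]⟩
      | succ k =>
        obtain ⟨j, hj1, hj2⟩ := rle_adj (b :: l) k u v (by simpa using h1) (by simpa using h2)
        exact ⟨j + 1, by simpa using hj1, by simpa using hj2⟩

theorem adj_rle [DecidableEq α] : ∀ (l : List α) (j : ℕ) (u v : α), u ≠ v →
    l[j]? = some u → l[j+1]? = some v →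
    ∃ k : ℕ, (rle l)[k]? = some u ∧ (rle l)[k+1]? = some v
  | [], j, u, v, _, h1, _ => by simp at h1
  | [a], j, u, v, _, _, h2 => by simp at h2
  | a :: b :: l, 0, u, v, huv, h1, h2 => by
    simp only [getElem?_cons_zero, Option.some_inj] at h1
    simp only [getElem?_cons_succ, getElem?_cons_zero, Option.some_inj] at h2
    subst h1; subst h2
    rw [show rle (a :: b :: l) = a :: rle (b :: l) from by simp [rle, huv]]
    obtain ⟨t, ht⟩ := rle_cons l b
    exact ⟨0, by simp, by simp [ht]⟩
  | a :: b :: l, j+1, u, v, huv, h1, h2 => by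
    obtain ⟨k, hk1, hk2⟩ := adj_rle (b :: l) j u v huv (by simpa using h1) (by simpa using h2)
    by_cases hab : a = b
    · rw [show rle (a :: b :: l) = rle (b :: l) from by simp [rle, hab]]
      exact ⟨k, hk1, hk2⟩
    · rw [show rle (a :: b :: l) = a :: rle (b :: l) from by simp [rle, hab]]
      exact ⟨k + 1, by simpa using hk1, by simpa using hk2⟩

theorem chain'_getElem? {R : α → α → Prop} {l : List α} (h : Chain' R l) {k : ℕ} {u v : α}
    (h1 : l[k]? = some u) (h2 : l[k+1]? = some v) : R u v := by
  rw [List.getElem?_eq_some_iff] at h1 h2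
  obtain ⟨hk, rfl⟩ := h1
  obtain ⟨hk1, rfl⟩ := h2
  have := List.isChain_iff_getElem.1 h k (by omega)
  simpa [List.get_eq_getElem] using this

end rle

variable {V : Type*} {Adj : V → V → Prop}

/-- the class map -/
def cl (Adj : V → V → Prop) : V → Quotient (sccSetoid Adj) := Quotient.mk (sccSetoid Adj)

theorem cl_eq_iff {u v : V} :
    cl Adj u = cl Adj v ↔ ReflTransGen Adj u v ∧ ReflTransGen Adj v u :=
  ⟨fun h => Quotient.exact h, fun h => Quotient.sound h⟩

theorem seqArc_two_iff (x : List V) (u v : V) :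
    seqArc 2 x u v ↔ ∃ k : ℕ, x[k]? = some u ∧ x[k+1]? = some v := by
  constructor
  · rintro ⟨k, k', h1, h2, h3, h4⟩
    have : k' = k + 1 := by omega
    subst this; exact ⟨k, h3, h4⟩
  · rintro ⟨k, h3, h4⟩
    exact ⟨k, k + 1, by omega, by omega, h3, h4⟩

end Stmt4Aux

theorem dir1 {V : Type*} (Adj : V → V → Prop) (x : List V)
    (hx : IsRealizationD 2 Adj x) : IsSimpleStep Adj := by
  classical
  obtain ⟨hne, hall, hadj⟩ := hx
  have harc : ∀ {k : ℕ} {u v : V}, x[k]? = some u → x[k+1]? = some v → Adj u v :=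
    fun h1 h2 => (hadj _ _).2 ((Stmt4Aux.seqArc_two_iff x _ _).2 ⟨_, h1, h2⟩)
  have hreach : ∀ (d k : ℕ) (u v : V), x[k]? = some u → x[k + d]? = some v →
      Relation.ReflTransGen Adj u v := by
    intro d
    induction d with
    | zero =>
      intro k u v h1 h2
      rw [Nat.add_zero, h1] at h2
      cases Option.some_inj.1 h2
      exact Relation.ReflTransGen.refl
    | succ d ih =>
      intro k u v h1 h2
      have hlen : k + d < x.length := by
        have := (List.getElem?_eq_some_iff.1 h2).1; omega
      have hw : x[k + d]? = some (x[k + d]'hlen) := List.getElem?_eq_getElem hlen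
      exact (ih k u _ h1 hw).tail (harc hw h2)
  set y := x.map (Stmt4Aux.cl Adj) with hy
  have hyx : ∀ k : ℕ, y[k]? = (x[k]?).map (Stmt4Aux.cl Adj) := fun k => List.getElem?_map ..
  have contig : ∀ (i j k : ℕ) (C : Quotient (sccSetoid Adj)), i ≤ j → j ≤ k →
      y[i]? = some C → y[k]? = some C → y[j]? = some C := by
    intro i j k C hij hjk h1 h2
    rw [hyx] at h1 h2 ⊢
    obtain ⟨a, ha, hca⟩ := Option.map_eq_some_iff.1 h1
    obtain ⟨c, hc, hcc⟩ := Option.map_eq_some_iff.1 h2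
    have hk : k < x.length := (List.getElem?_eq_some_iff.1 hc).1
    have hjlen : j < x.length := lt_of_le_of_lt hjk hk
    have hb : x[j]? = some (x[j]'hjlen) := List.getElem?_eq_getElem hjlen
    set b := x[j]'hjlen with hbdef
    have r1 : Relation.ReflTransGen Adj a b := hreach (j - i) i a b ha
      (by rwa [Nat.add_sub_cancel' hij])
    have r2 : Relation.ReflTransGen Adj b c := hreach (k - j) j b c hb
      (by rwa [Nat.add_sub_cancel' hjk])
    have r3 := Stmt4Aux.cl_eq_iff.1 (hcc.trans hca.symm)
    have : Stmt4Aux.cl Adj b = C := by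
      rw [← hca]
      exact Stmt4Aux.cl_eq_iff.2 ⟨r2.trans r3.1, r1⟩ |>.symm ▸ rfl
    rw [hb]
    simp [this]
  -- positions of a given pair of consecutive distinct classes are unique
  have posuniq : ∀ (j j' : ℕ) (C C' : Quotient (sccSetoid Adj)), C ≠ C' →
      y[j]? = some C → y[j+1]? = some C' → y[j']? = some C → y[j'+1]? = some C' → j = j' := by
    intro j j' C C' hCC' h1 h2 h1' h2'
    rcases lt_trichotomy j j' with h | h | h
    · exact absurd (contig j (j+1) j' C (by omega) (by omega) h1 h1') (by rw [h2]; simpa using hCC'.symm)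
    · exact h
    · exact absurd (contig j' (j'+1) j C (by omega) (by omega) h1' h1) (by rw [h2']; simpa using hCC'.symm)
  refine ⟨Stmt4Aux.rle y, ?_, ?_, ?_, ?_⟩
  · -- Nodup
    rw [List.nodup_iff_getElem?_ne_getElem?]
    intro a b hab hb hEq
    have hbs : (Stmt4Aux.rle y)[b]? = some ((Stmt4Aux.rle y)[b]'hb) := List.getElem?_eq_getElem hb
    set C := (Stmt4Aux.rle y)[b]'hb with hC
    have has : (Stmt4Aux.rle y)[a]? = some C := by rw [hEq, hbs]
    have ha1 : a + 1 < (Stmt4Aux.rle y).length := by omega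
    have ha1s : (Stmt4Aux.rle y)[a+1]? = some ((Stmt4Aux.rle y)[a+1]'ha1) :=
      List.getElem?_eq_getElem ha1
    set D := (Stmt4Aux.rle y)[a+1]'ha1 with hD
    have hCD : C ≠ D := Stmt4Aux.chain'_getElem? (Stmt4Aux.rle_chain' y) has ha1s
    obtain ⟨f, hf⟩ := List.sublist_iff_exists_orderEmbedding_getElem?_eq.1 (Stmt4Aux.rle_sublist y)
    have e1 : y[f a]? = some C := by rw [← hf]; exact has
    have e2 : y[f (a+1)]? = some D := by rw [← hf]; exact ha1s
    have e3 : y[f b]? = some C := by rw [← hf]; exact hbs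
    have hm1 : f a ≤ f (a+1) := f.le_iff_le.2 (by omega)
    have hm2 : f (a+1) ≤ f b := f.le_iff_le.2 (by omega)
    have := contig (f a) (f (a+1)) (f b) C hm1 hm2 e1 e3
    rw [e2] at this
    exact hCD (Option.some_inj.1 this).symm
  · -- complete
    intro C
    obtain ⟨v, rfl⟩ := Quotient.exists_rep C
    exact Stmt4Aux.mem_rle _ _ (List.mem_map_of_mem (hall v))
  · -- condAdj iff consecutive
    intro C C'
    constructor
    · rintro ⟨hCC', u, v, huv, hu, hv⟩
      obtain ⟨k, h1, h2⟩ := (Stmt4Aux.seqArc_two_iff x u v).1 ((hadj u v).1 huv)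
      refine Stmt4Aux.adj_rle y k C C' hCC' ?_ ?_
      · rw [hyx, h1]; simpa [Stmt4Aux.cl] using hu
      · rw [hyx, h2]; simpa [Stmt4Aux.cl] using hv
    · rintro ⟨k, h1, h2⟩
      have hCC' : C ≠ C' := Stmt4Aux.chain'_getElem? (Stmt4Aux.rle_chain' y) h1 h2
      obtain ⟨j, hj1, hj2⟩ := Stmt4Aux.rle_adj y k C C' h1 h2
      rw [hyx] at hj1 hj2
      obtain ⟨u, hu, hcu⟩ := Option.map_eq_some_iff.1 hj1
      obtain ⟨v, hv, hcv⟩ := Option.map_eq_some_iff.1 hj2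
      exact ⟨hCC', u, v, harc hu hv, hcu, hcv⟩
  · -- unique arc
    intro k C C' h1 h2
    have hCC' : C ≠ C' := Stmt4Aux.chain'_getElem? (Stmt4Aux.rle_chain' y) h1 h2
    obtain ⟨j, hj1, hj2⟩ := Stmt4Aux.rle_adj y k C C' h1 h2
    rw [hyx] at hj1 hj2
    obtain ⟨u, hu, hcu⟩ := Option.map_eq_some_iff.1 hj1
    obtain ⟨v, hv, hcv⟩ := Option.map_eq_some_iff.1 hj2
    refine ⟨(u, v), ⟨harc hu hv, hcu, hcv⟩, ?_⟩
    rintro ⟨u', v'⟩ ⟨huv', hcu', hcv'⟩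
    obtain ⟨j', hj1', hj2'⟩ := (Stmt4Aux.seqArc_two_iff x u' v').1 ((hadj u' v').1 huv')
    have e1 : y[j']? = some C := by rw [hyx, hj1']; simpa [Stmt4Aux.cl] using hcu'
    have e2 : y[j'+1]? = some C' := by rw [hyx, hj2']; simpa [Stmt4Aux.cl] using hcv'
    have e3 : y[j]? = some C := by rw [hyx, hu]; simpa using hcu
    have e4 : y[j+1]? = some C' := by rw [hyx, hv]; simpa using hcv
    have hjj : j' = j := posuniq j' j C C' hCC' e1 e2 e3 e4
    subst hjj
    rw [hj1'] at hu
    rw [hj2'] at hv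
    cases Option.some_inj.1 hu
    cases Option.some_inj.1 hv
    rfl

namespace Stmt4Aux

variable {α : Type*} {V : Type*}

theorem head_decomp {l : List α} {u : α} (h : l.head? = some u) : ∃ t, l = u :: t := by
  cases l with
  | nil => simp at h
  | cons a t =>
    simp only [List.head?_cons, Option.some_inj] at h
    exact ⟨t, by rw [h]⟩

theorem last_decomp {l : List α} {v : α} (h : l.getLast? = some v) : ∃ l', l = l' ++ [v] := by
  rcases l.eq_nil_or_concat' with rfl | ⟨l', a, rfl⟩
  · simp at h
  · rw [List.getLast?_concat] at h
    cases Option.some_inj.1 h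
    exact ⟨l', rfl⟩

theorem mem_of_getLast?' {l : List α} {v : α} (h : l.getLast? = some v) : v ∈ l := by
  obtain ⟨l', rfl⟩ := last_decomp h
  simp

theorem pair_decomp {l : List α} {k : ℕ} {a b : α}
    (h1 : l[k]? = some a) (h2 : l[k+1]? = some b) :
    ∃ l1 l2, l = l1 ++ a :: b :: l2 := by
  obtain ⟨hk1, hb⟩ := List.getElem?_eq_some_iff.1 h2
  obtain ⟨hk, ha⟩ := List.getElem?_eq_some_iff.1 h1
  refine ⟨l.take k, l.drop (k+2), ?_⟩
  have hd : l.drop k = a :: b :: l.drop (k+2) := by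
    rw [List.drop_eq_getElem_cons hk, List.drop_eq_getElem_cons hk1, ha, hb]
  conv_lhs => rw [← List.take_append_drop k l]
  rw [hd]

theorem decomp_pair {l l1 l2 : List α} {a b : α} (h : l = l1 ++ a :: b :: l2) :
    ∃ k : ℕ, l[k]? = some a ∧ l[k+1]? = some b := by
  subst h
  refine ⟨l1.length, ?_, ?_⟩
  · rw [List.getElem?_append_right le_rfl]
    simp
  · rw [List.getElem?_append_right (by omega)]
    simp [Nat.add_sub_cancel_left]

theorem walk_exists {Adj : V → V → Prop} {u v : V} (h : Relation.ReflTransGen Adj u v) :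
    ∃ l : List V, l.head? = some u ∧ l.getLast? = some v ∧ l.Chain' Adj := by
  induction h with
  | refl => exact ⟨[u], rfl, rfl, List.isChain_singleton u⟩
  | @tail b c _ hbc ih =>
    obtain ⟨l, hh, hl, hc⟩ := ih
    obtain ⟨t, rfl⟩ := head_decomp hh
    refine ⟨(u :: t) ++ [c], ?_, ?_, ?_⟩
    · rw [List.head?_append_of_ne_nil _ (by simp)]
      exact hh
    · rw [List.getLast?_concat]
    · refine List.isChain_append.2 ⟨hc, List.isChain_singleton c, ?_⟩
      intro x hx y hy
      simp only [List.head?_cons, Option.mem_def, Option.some_inj] at hy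
      rw [Option.mem_def, hl] at hx
      cases Option.some_inj.1 hx
      cases hy
      exact hbc

open Classical in
noncomputable def path (Adj : V → V → Prop) (u v : V) : List V :=
  if Adj u v then [u, v]
  else if h : Relation.ReflTransGen Adj u v then Classical.choose (walk_exists h) else [u, v]

theorem path_of_adj {Adj : V → V → Prop} {u v : V} (h : Adj u v) : path Adj u v = [u, v] := by
  rw [path, if_pos h]

theorem path_cases (Adj : V → V → Prop) (u v : V) :
    (Adj u v ∧ path Adj u v = [u, v]) ∨
    (¬ Adj u v ∧ ∃ h2 : Relation.ReflTransGen Adj u v,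
      path Adj u v = Classical.choose (walk_exists h2)) ∨
    (¬ Relation.ReflTransGen Adj u v ∧ path Adj u v = [u, v]) := by
  by_cases h1 : Adj u v
  · exact Or.inl ⟨h1, by rw [path, if_pos h1]⟩
  · by_cases h2 : Relation.ReflTransGen Adj u v
    · exact Or.inr (Or.inl ⟨h1, h2, by rw [path, if_neg h1, dif_pos h2]⟩)
    · exact Or.inr (Or.inr ⟨h2, by rw [path, if_neg h1, dif_neg h2]⟩)

theorem path_head (Adj : V → V → Prop) (u v : V) : (path Adj u v).head? = some u := by
  rcases path_cases Adj u v with ⟨_, h⟩ | ⟨_, h2, h⟩ | ⟨_, h⟩ <;> rw [h]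
  · rfl
  · exact (Classical.choose_spec (walk_exists h2)).1
  · rfl

theorem path_last (Adj : V → V → Prop) (u v : V) : (path Adj u v).getLast? = some v := by
  rcases path_cases Adj u v with ⟨_, h⟩ | ⟨_, h2, h⟩ | ⟨_, h⟩ <;> rw [h]
  · rfl
  · exact (Classical.choose_spec (walk_exists h2)).2.1
  · rfl

theorem path_ne_nil (Adj : V → V → Prop) (u v : V) : path Adj u v ≠ [] := by
  intro h
  have := path_head Adj u v
  rw [h] at this
  simp at this

theorem path_spec {Adj : V → V → Prop} {u v : V} (h : Relation.ReflTransGen Adj u v) :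
    (path Adj u v).head? = some u ∧ (path Adj u v).getLast? = some v ∧
      (path Adj u v).Chain' Adj := by
  rcases path_cases Adj u v with ⟨h1, hp⟩ | ⟨_, h2, hp⟩ | ⟨h2, hp⟩ <;> rw [hp]
  · exact ⟨rfl, rfl, List.isChain_pair.2 h1⟩
  · exact Classical.choose_spec (walk_exists h2)
  · exact absurd h h2

theorem path_chain {Adj : V → V → Prop} {u v : V} (h : Relation.ReflTransGen Adj u v) :
    (path Adj u v).Chain' Adj := (path_spec h).2.2

noncomputable def walkL (Adj : V → V → Prop) : List V → List V
  | [] => []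
  | [u] => [u]
  | u :: v :: P => path Adj u v ++ (walkL Adj (v :: P)).tail

theorem walkL_cons_cons (Adj : V → V → Prop) (u v : V) (P : List V) :
    walkL Adj (u :: v :: P) = path Adj u v ++ (walkL Adj (v :: P)).tail := rfl

theorem walkL_head (Adj : V → V → Prop) : ∀ (P : List V) (u : V),
    ∃ t, walkL Adj (u :: P) = u :: t
  | [], u => ⟨[], rfl⟩
  | v :: P, u => by
    obtain ⟨t, ht⟩ := head_decomp (path_head Adj u v)
    exact ⟨t ++ (walkL Adj (v :: P)).tail, by rw [walkL_cons_cons, ht]; simp⟩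

theorem mem_walkL (Adj : V → V → Prop) : ∀ (P : List V) (a : V), a ∈ P → a ∈ walkL Adj P
  | [u], a, h => by simpa [walkL] using h
  | u :: v :: P, a, h => by
    rw [walkL_cons_cons]
    rcases List.mem_cons.1 h with rfl | h
    · exact List.mem_append_left _ (head_decomp (path_head Adj a v) |>.elim
        fun t ht => ht ▸ List.mem_cons_self)
    · have ih := mem_walkL Adj (v :: P) a h
      obtain ⟨t, ht⟩ := walkL_head Adj P v
      rw [ht] at ih
      rcases List.mem_cons.1 ih with rfl | hmem
      · exact List.mem_append_left _ (mem_of_getLast?' (path_last Adj u a))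
      · exact List.mem_append_right _ (by rw [ht]; exact hmem)

theorem walkL_chain (Adj : V → V → Prop) : ∀ (P : List V),
    List.Chain' (Relation.ReflTransGen Adj) P → List.Chain' Adj (walkL Adj P)
  | [], _ => List.isChain_nil
  | [u], _ => List.isChain_singleton u
  | u :: v :: P, h => by
    rw [walkL_cons_cons]
    obtain ⟨huv, hvp⟩ := List.isChain_cons_cons.1 h
    have ih := walkL_chain Adj (v :: P) hvp
    obtain ⟨t, ht⟩ := walkL_head Adj P v
    rw [ht] at ih ⊢
    simp only [List.tail_cons]
    refine List.isChain_append.2 ⟨path_chain huv, (List.isChain_cons.1 ih).2, ?_⟩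
    intro a ha y hy
    rw [Option.mem_def, path_last Adj u v] at ha
    cases Option.some_inj.1 ha
    exact (List.isChain_cons.1 ih).1 y hy

theorem walkL_pair (Adj : V → V → Prop) {a b : V} (hab : Adj a b) :
    ∀ (l1 : List V) (P l2 : List V), P = l1 ++ a :: b :: l2 →
    ∃ m1 m2, walkL Adj P = m1 ++ a :: b :: m2
  | [], P, l2, hP => by
    rw [hP, List.nil_append, walkL_cons_cons, path_of_adj hab]
    exact ⟨[], (walkL Adj (b :: l2)).tail, by simp⟩
  | c :: l1, P, l2, hP => by
    subst hP
    rw [List.cons_append]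
    cases hQ : l1 ++ a :: b :: l2 with
    | nil => exact absurd hQ (by simp)
    | cons d P'' =>
      rw [walkL_cons_cons]
      obtain ⟨m1, m2, hm⟩ := walkL_pair Adj hab l1 (l1 ++ a :: b :: l2) l2 rfl
      rw [hQ] at hm
      obtain ⟨t, ht⟩ := walkL_head Adj P'' d
      rw [ht] at hm ⊢
      simp only [List.tail_cons]
      cases m1 with
      | nil =>
        simp only [List.nil_append] at hm
        injection hm with h1 h2
        subst h1
        subst h2
        obtain ⟨pc, hpc⟩ := last_decomp (path_last Adj c d)
        exact ⟨pc, m2, by rw [hpc]; simp⟩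
      | cons d' m1' =>
        rw [List.cons_append] at hm
        injection hm with h1 h2
        subst h1
        subst h2
        exact ⟨path Adj c d ++ m1', m2, by simp⟩

end Stmt4Aux

namespace Stmt4Aux

variable {V : Type*} [Fintype V]

open Classical in
noncomputable def classVerts (Adj : V → V → Prop) (C : Quotient (sccSetoid Adj)) : List V :=
  (Finset.univ.filter (fun v => cl Adj v = C)).toList

theorem mem_classVerts {Adj : V → V → Prop} {C} {v : V} :
    v ∈ classVerts Adj C ↔ cl Adj v = C := by
  simp [classVerts]

open Classical in
noncomputable def internalArcs (Adj : V → V → Prop) (C : Quotient (sccSetoid Adj)) :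
    List (V × V) :=
  (Finset.univ.filter (fun p : V × V => Adj p.1 p.2 ∧ cl Adj p.1 = C ∧ cl Adj p.2 = C)).toList

theorem mem_internalArcs {Adj : V → V → Prop} {C} {p : V × V} :
    p ∈ internalArcs Adj C ↔ Adj p.1 p.2 ∧ cl Adj p.1 = C ∧ cl Adj p.2 = C := by
  simp [internalArcs]

noncomputable def pts (Adj : V → V → Prop) (C : Quotient (sccSetoid Adj)) : List V :=
  classVerts Adj C ++ (internalArcs Adj C).flatMap (fun p => [p.1, p.2])

theorem mem_pts_class {Adj : V → V → Prop} {C} {a : V} (h : a ∈ pts Adj C) : cl Adj a = C := by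
  rcases List.mem_append.1 h with h | h
  · exact mem_classVerts.1 h
  · obtain ⟨p, hp, ha⟩ := List.mem_flatMap.1 h
    have hspec := mem_internalArcs.1 hp
    rcases (by simpa using ha : a = p.1 ∨ a = p.2) with rfl | rfl
    · exact hspec.2.1
    · exact hspec.2.2

theorem pts_ne_nil {Adj : V → V → Prop} (C) : pts Adj C ≠ [] := by
  obtain ⟨v, rfl⟩ := Quotient.exists_rep C
  have hv : v ∈ pts Adj (Quotient.mk (sccSetoid Adj) v) :=
    List.mem_append_left _ (mem_classVerts.2 rfl)
  exact fun h => by simp [h] at hv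

theorem pts_chain (Adj : V → V → Prop) (C) :
    List.Chain' (Relation.ReflTransGen Adj) (pts Adj C) :=
  List.Pairwise.isChain (List.pairwise_of_forall_mem_list fun a ha b hb =>
    (cl_eq_iff.1 ((mem_pts_class ha).trans (mem_pts_class hb).symm)).1)

open Classical in
noncomputable def earc [Nonempty V] (Adj : V → V → Prop)
    (C C' : Quotient (sccSetoid Adj)) : V × V :=
  if h : ∃ p : V × V, Adj p.1 p.2 ∧ cl Adj p.1 = C ∧ cl Adj p.2 = C' then h.choose
  else (Classical.arbitrary V, Classical.arbitrary V)

theorem earc_spec [Nonempty V] {Adj : V → V → Prop} {C C'}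
    (h : ∃ p : V × V, Adj p.1 p.2 ∧ cl Adj p.1 = C ∧ cl Adj p.2 = C') :
    Adj (earc Adj C C').1 (earc Adj C C').2 ∧ cl Adj (earc Adj C C').1 = C ∧
      cl Adj (earc Adj C C').2 = C' := by
  rw [earc, dif_pos h]
  exact h.choose_spec

noncomputable def itin [Nonempty V] (Adj : V → V → Prop) :
    List (Quotient (sccSetoid Adj)) → List V
  | [] => []
  | [C] => pts Adj C
  | C :: C' :: L =>
      pts Adj C ++ (earc Adj C C').1 :: (earc Adj C C').2 :: itin Adj (C' :: L)

theorem itin_nil [Nonempty V] (Adj : V → V → Prop) : itin Adj [] = [] := rfl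

theorem itin_single [Nonempty V] (Adj : V → V → Prop) (C) : itin Adj [C] = pts Adj C := rfl

theorem itin_cons2 [Nonempty V] (Adj : V → V → Prop) (C C') (L) :
    itin Adj (C :: C' :: L) =
      pts Adj C ++ (earc Adj C C').1 :: (earc Adj C C').2 :: itin Adj (C' :: L) := rfl

theorem itin_cons [Nonempty V] (Adj : V → V → Prop) (C) (L) :
    ∃ r, itin Adj (C :: L) = pts Adj C ++ r := by
  cases L with
  | nil => exact ⟨[], by rw [itin_single]; simp⟩
  | cons C' L => exact ⟨_, itin_cons2 Adj C C' L⟩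

theorem mem_itin [Nonempty V] (Adj : V → V → Prop) : ∀ (L) (C), C ∈ L →
    ∀ a ∈ pts Adj C, a ∈ itin Adj L
  | [], C, h => absurd h (by simp)
  | [D], C, h => by
    intro a ha
    rcases List.mem_singleton.1 h with rfl
    rw [itin_single]
    exact ha
  | D :: D' :: L, C, h => by
    intro a ha
    rw [itin_cons2]
    rcases List.mem_cons.1 h with rfl | h
    · exact List.mem_append_left _ ha
    · exact List.mem_append_right _ (List.mem_cons_of_mem _ (List.mem_cons_of_mem _
        (mem_itin Adj (D' :: L) C h a ha)))

theorem itin_chunk [Nonempty V] (Adj : V → V → Prop) : ∀ (L) (C), C ∈ L →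
    ∃ w1 w2, itin Adj L = w1 ++ pts Adj C ++ w2
  | [], C, h => absurd h (by simp)
  | [D], C, h => by
    rcases List.mem_singleton.1 h with rfl
    exact ⟨[], [], by rw [itin_single]; simp⟩
  | D :: D' :: L, C, h => by
    rcases List.mem_cons.1 h with rfl | h
    · exact ⟨[], (earc Adj C D').1 :: (earc Adj C D').2 :: itin Adj (D' :: L), by
        rw [itin_cons2]; simp⟩
    · obtain ⟨w1, w2, hw⟩ := itin_chunk Adj (D' :: L) C h
      exact ⟨pts Adj D ++ [(earc Adj D D').1, (earc Adj D D').2] ++ w1, w2, by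
        rw [itin_cons2, hw]; simp⟩

theorem itin_internal [Nonempty V] (Adj : V → V → Prop) {u v : V} (huv : Adj u v)
    (hc : cl Adj v = cl Adj u) :
    ∀ L, cl Adj u ∈ L → ∃ m1 m2, itin Adj L = m1 ++ u :: v :: m2 := by
  intro L hL
  obtain ⟨w1, w2, hw⟩ := itin_chunk Adj L _ hL
  have hmem : (u, v) ∈ internalArcs Adj (cl Adj u) := mem_internalArcs.2 ⟨huv, rfl, hc⟩
  obtain ⟨s, t, hst⟩ := List.append_of_mem hmem
  refine ⟨w1 ++ classVerts Adj (cl Adj u) ++ s.flatMap (fun p => [p.1, p.2]),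
          t.flatMap (fun p => [p.1, p.2]) ++ w2, ?_⟩
  rw [hw, pts, hst]
  simp

theorem itin_earc [Nonempty V] (Adj : V → V → Prop) {C C'} :
    ∀ (L1 L L2 : List (Quotient (sccSetoid Adj))), L = L1 ++ C :: C' :: L2 →
    ∃ m1 m2, itin Adj L = m1 ++ (earc Adj C C').1 :: (earc Adj C C').2 :: m2
  | [], L, L2, h => by
    rw [h, List.nil_append, itin_cons2]
    exact ⟨pts Adj C, itin Adj (C' :: L2), rfl⟩
  | D :: L1, L, L2, h => by
    cases hQ : L1 ++ C :: C' :: L2 with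
    | nil => exact absurd hQ (by simp)
    | cons E R =>
      obtain ⟨m1, m2, hm⟩ := itin_earc Adj L1 (L1 ++ C :: C' :: L2) L2 rfl
      rw [hQ] at hm
      rw [h, List.cons_append, hQ, itin_cons2, hm]
      exact ⟨pts Adj D ++ (earc Adj D E).1 :: (earc Adj D E).2 :: m1, m2, by simp⟩

theorem itin_chain [Nonempty V] (Adj : V → V → Prop) : ∀ L,
    List.Chain' (fun C C' => ∃ p : V × V, Adj p.1 p.2 ∧ cl Adj p.1 = C ∧ cl Adj p.2 = C') L →
    List.Chain' (Relation.ReflTransGen Adj) (itin Adj L)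
  | [], _ => by rw [itin_nil]; exact List.isChain_nil
  | [C], _ => by rw [itin_single]; exact pts_chain Adj C
  | C :: C' :: L, h => by
    obtain ⟨hE, h'⟩ := List.isChain_cons_cons.1 h
    have spec := earc_spec hE
    rw [itin_cons2]
    refine List.isChain_append.2 ⟨pts_chain Adj C, ?_, ?_⟩
    · refine List.isChain_cons_cons.2 ⟨Relation.ReflTransGen.single spec.1,
        List.isChain_cons.2 ⟨?_, itin_chain Adj (C' :: L) h'⟩⟩
      intro y hy
      obtain ⟨r, hr⟩ := itin_cons Adj C' L
      rw [Option.mem_def, hr, List.head?_append_of_ne_nil _ (pts_ne_nil C')] at hy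
      have hym : y ∈ pts Adj C' := (head_decomp hy).elim fun t ht =>
        ht ▸ List.mem_cons_self
      exact (cl_eq_iff.1 (spec.2.2.trans (mem_pts_class hym).symm)).1
    · intro a ha y hy
      simp only [List.head?_cons, Option.mem_def, Option.some_inj] at hy
      subst hy
      have ha' : a ∈ pts Adj C := mem_of_getLast?' (Option.mem_def.1 ha)
      exact (cl_eq_iff.1 ((mem_pts_class ha').trans spec.2.1.symm)).1

end Stmt4Aux

theorem dir2 {V : Type*} [Fintype V] [Nonempty V] (Adj : V → V → Prop)
    (h : IsSimpleStep Adj) : ∃ x : List V, IsRealizationD 2 Adj x := by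
  classical
  open Stmt4Aux in
  obtain ⟨L, hnd, hcompl, hcarc, huniq⟩ := h
  have HC : List.Chain' (fun C C' => ∃ p : V × V, Adj p.1 p.2 ∧
      Stmt4Aux.cl Adj p.1 = C ∧ Stmt4Aux.cl Adj p.2 = C') L := by
    refine List.isChain_iff_getElem.2 ?_
    intro i hi
    have h1 : L[i]? = some (L.get ⟨i, by omega⟩) := by
      rw [List.get_eq_getElem]; exact List.getElem?_eq_getElem (by omega)
    have h2 : L[i+1]? = some (L.get ⟨i+1, by omega⟩) := by
      rw [List.get_eq_getElem]; exact List.getElem?_eq_getElem (by omega)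
    obtain ⟨_, u, v, huv, hcu, hcv⟩ := (hcarc _ _).2 ⟨i, h1, h2⟩
    exact ⟨(u, v), huv, hcu, hcv⟩
  set P := Stmt4Aux.itin Adj L with hPdef
  have hvmem : ∀ v : V, v ∈ P := fun v =>
    Stmt4Aux.mem_itin Adj L _ (hcompl _) v
      (List.mem_append_left _ (Stmt4Aux.mem_classVerts.2 rfl))
  have hPne : P ≠ [] := fun hh => by simp [hh] at hvmem
  have hchain : List.Chain' Adj (Stmt4Aux.walkL Adj P) :=
    Stmt4Aux.walkL_chain Adj P (Stmt4Aux.itin_chain Adj L HC)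
  refine ⟨Stmt4Aux.walkL Adj P, ?_, ?_, ?_⟩
  · cases hp : P with
    | nil => exact absurd hp hPne
    | cons p0 P' =>
      obtain ⟨t, ht⟩ := Stmt4Aux.walkL_head Adj P' p0
      rw [ht]
      simp
  · exact fun v => Stmt4Aux.mem_walkL Adj P v (hvmem v)
  · intro u v
    rw [Stmt4Aux.seqArc_two_iff]
    constructor
    · intro huv
      by_cases hc : Stmt4Aux.cl Adj u = Stmt4Aux.cl Adj v
      · obtain ⟨m1, m2, hm⟩ := Stmt4Aux.itin_internal Adj huv hc.symm L (hcompl _)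
        obtain ⟨n1, n2, hn⟩ := Stmt4Aux.walkL_pair Adj huv m1 P m2 hm
        exact Stmt4Aux.decomp_pair hn
      · have hcond : condAdj Adj (Stmt4Aux.cl Adj u) (Stmt4Aux.cl Adj v) :=
          ⟨hc, u, v, huv, rfl, rfl⟩
        obtain ⟨k, h1, h2⟩ := (hcarc _ _).1 hcond
        obtain ⟨L1, L2, hL⟩ := Stmt4Aux.pair_decomp h1 h2
        obtain ⟨e, he, hu⟩ := huniq k _ _ h1 h2
        have hearc := Stmt4Aux.earc_spec (Adj := Adj) (C := Stmt4Aux.cl Adj u)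
          (C' := Stmt4Aux.cl Adj v) ⟨(u, v), huv, rfl, rfl⟩
        have h3 : Stmt4Aux.earc Adj (Stmt4Aux.cl Adj u) (Stmt4Aux.cl Adj v) = e :=
          hu _ ⟨hearc.1, hearc.2.1, hearc.2.2⟩
        have h4 : (u, v) = e := hu _ ⟨huv, rfl, rfl⟩
        obtain ⟨m1, m2, hm⟩ := Stmt4Aux.itin_earc Adj L1 L L2 hL
        rw [h3, ← h4] at hm
        obtain ⟨n1, n2, hn⟩ := Stmt4Aux.walkL_pair Adj huv m1 P m2 hm
        exact Stmt4Aux.decomp_pair hn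
    · rintro ⟨k, h1, h2⟩
      exact Stmt4Aux.chain'_getElem? hchain h1 h2

theorem stmt4 {V : Type*} [Fintype V] [Nonempty V] (Adj : V → V → Prop) :
    (∃ x : List V, IsRealizationD 2 Adj x) ↔ IsSimpleStep Adj := by
  constructor
  · rintro ⟨x, hx⟩
    exact dir1 Adj x hx
  · exact dir2 Adj
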